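/- For all integers m ≥ 2, with c_j as above and d_k = ∑_{j=k+1}^{m-1} c_j (so d_{m-1} = 0), one has ∑_{j=0}^{m-1} d_j = (m/2) * c_1. Equivalently, ∑_{j=1}^{m-1} j*c_j = (m/2)*c_1. -/

import Mathlib

open Finset

lemma key (k : ℕ) :
    ∑ i ∈ range (k+1), (k+1-i) * Nat.choose (2*k+2) i
      = (k+1) * Nat.choose (2*k+1) k := by
  set R' := ∑ i ∈ range k, Nat.choose (2*k+1) i with hR'
  set R := ∑ i ∈ range (k+1), Nat.choose (2*k+1) i with hR
  have hSQ : (∑ i ∈ range (k+1), (k+1-i) * Nat.choose (2*k+2) i)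
      + ∑ i ∈ range (k+1), i * Nat.choose (2*k+2) i
      = (k+1) * ∑ i ∈ range (k+1), Nat.choose (2*k+2) i := by
    rw [← Finset.sum_add_distrib, Finset.mul_sum]
    refine Finset.sum_congr rfl fun i hi => ?_
    have : i ≤ k := by simpa [Nat.lt_succ_iff] using hi
    rw [← Nat.add_mul]
    congr 1
    omega
  have hQ : ∑ i ∈ range (k+1), i * Nat.choose (2*k+2) i = (2*k+2) * R' := by
    rw [Finset.sum_range_succ' (fun i => i * Nat.choose (2*k+2) i)]
    simp only [Nat.zero_mul, Nat.add_zero, hR', Finset.mul_sum]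
    refine Finset.sum_congr rfl fun i hi => ?_
    have h := Nat.add_one_mul_choose_eq (2*k+1) i
    rw [mul_comm]
    simpa using h.symm
  have hP : ∑ i ∈ range (k+1), Nat.choose (2*k+2) i = R' + R := by
    rw [Finset.sum_range_succ' (fun i => Nat.choose (2*k+2) i)]
    have h1 : ∀ i, Nat.choose (2*k+2) (i+1) = Nat.choose (2*k+1) i + Nat.choose (2*k+1) (i+1) :=
      fun i => Nat.choose_succ_succ (2*k+1) i
    simp only [h1, Finset.sum_add_distrib]
    have h2 : R = 1 + ∑ i ∈ range k, Nat.choose (2*k+1) (i+1) := by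
      rw [hR, Finset.sum_range_succ' (fun i => Nat.choose (2*k+1) i)]
      simp [add_comm]
    simp [Nat.choose_zero_right, h2]
    omega
  have hRR : R = R' + Nat.choose (2*k+1) k := by
    rw [hR, hR', Finset.sum_range_succ]
  have := hSQ
  rw [hQ, hP, hRR] at this
  -- this : S + (2k+2)*R' = (k+1)*(R' + (R' + C))
  have hexp : (k+1) * (R' + (R' + Nat.choose (2*k+1) k))
      = (2*k+2)*R' + (k+1) * Nat.choose (2*k+1) k := by ring
  omega

lemma key2 (k : ℕ) :
    2 * ∑ j ∈ Icc 1 (k+1), j * Nat.choose (2*k+2) (k+1-j)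
      = (k+2) * Nat.choose (2*k+2) k := by
  have hre : ∑ j ∈ Icc 1 (k+1), j * Nat.choose (2*k+2) (k+1-j)
      = ∑ i ∈ range (k+1), (k+1-i) * Nat.choose (2*k+2) i := by
    refine Finset.sum_nbij' (fun j => k+1-j) (fun i => k+1-i) ?_ ?_ ?_ ?_ ?_ <;>
      intro a ha <;> simp only [mem_Icc, mem_range] at ha ⊢
    · omega
    · omega
    · omega
    · omega
    · have h1 : k+1-(k+1-a) = a := by omega
      rw [h1]
  rw [hre, key]
  have h1 := Nat.add_one_mul_choose_eq (2*k+1) k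
  have h2 := Nat.choose_succ_right_eq (2*k+2) k
  -- h1 : (2k+2) * C(2k+1,k) = C(2k+2,k+1) * (k+1)
  -- h2 : C(2k+2,k+1) * (k+1) = C(2k+2,k) * (2k+2-k)
  have h3 : 2*k+2-k = k+2 := by omega
  rw [h3] at h2
  calc 2 * ((k+1) * Nat.choose (2*k+1) k) = (2*k+1+1) * Nat.choose (2*k+1) k := by ring
    _ = Nat.choose (2*k+2) (k+1) * (k+1) := h1
    _ = Nat.choose (2*k+2) k * (k+2) := h2
    _ = (k+2) * Nat.choose (2*k+2) k := by ring

theorem stmt_1 (m : ℕ) (hm : 2 ≤ m)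
    (A : ℝ) (hA : A = ∏ j ∈ Finset.Icc 1 m, ((2 * (j : ℝ) - 1) / (2 * (j : ℝ))))
    (c : ℕ → ℝ)
    (hc : ∀ j, c j = (2 : ℝ) ^ ((2 : ℤ) - 2 * (m : ℤ)) / A *
      (Nat.choose (2 * m - 2) (m - 1 - j) : ℝ))
    (d : ℕ → ℝ) (hd : ∀ k, d k = ∑ j ∈ Finset.Icc (k + 1) (m - 1), c j) :
    (∑ j ∈ Finset.range m, d j) = ((m : ℝ) / 2) * c 1 ∧
    (∑ j ∈ Finset.Icc 1 (m - 1), (j : ℝ) * c j) = ((m : ℝ) / 2) * c 1 := by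
  obtain ⟨k, rfl⟩ : ∃ k, m = k + 2 := ⟨m - 2, by omega⟩
  set K : ℝ := (2 : ℝ) ^ ((2 : ℤ) - 2 * ((k+2 : ℕ) : ℤ)) / A with hK
  have hm1 : k + 2 - 1 = k + 1 := by omega
  have h2m : 2 * (k + 2) - 2 = 2*k+2 := by omega
  have hcj : ∀ j, c j = K * (Nat.choose (2*k+2) (k+1-j) : ℝ) := by
    intro j
    rw [hc j, h2m, hm1]
  -- second conjunct
  have hnat := key2 k
  have hreal : ∑ j ∈ Finset.Icc 1 (k+1), (j : ℝ) * (Nat.choose (2*k+2) (k+1-j) : ℝ)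
      = (((k:ℝ)+2) / 2) * (Nat.choose (2*k+2) k : ℝ) := by
    have h := congrArg (fun n : ℕ => (n : ℝ)) hnat
    push_cast at h
    linarith
  have hsecond : (∑ j ∈ Finset.Icc 1 (k + 2 - 1), (j : ℝ) * c j)
      = (((k+2 : ℕ) : ℝ) / 2) * c 1 := by
    rw [hm1]
    have : ∑ j ∈ Finset.Icc 1 (k+1), (j : ℝ) * c j
        = K * ∑ j ∈ Finset.Icc 1 (k+1), (j : ℝ) * (Nat.choose (2*k+2) (k+1-j) : ℝ) := by
      rw [Finset.mul_sum]
      refine Finset.sum_congr rfl fun j _ => ?_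
      rw [hcj j]; ring
    rw [this, hreal, hcj 1]
    push_cast
    ring
  refine ⟨?_, hsecond⟩
  -- first conjunct: swap sums
  have hdd : ∑ j ∈ Finset.range (k+2), d j
      = ∑ j ∈ Finset.Icc 1 (k + 2 - 1), (j : ℝ) * c j := by
    rw [hm1]
    have hfil : ∀ j : ℕ, Finset.Icc (j+1) (k+1)
        = (Finset.Icc 1 (k+1)).filter (fun x => j < x) := by
      intro j; ext x; simp only [mem_Icc, mem_filter]; omega
    calc ∑ j ∈ Finset.range (k+2), d j
        = ∑ j ∈ Finset.range (k+2), ∑ x ∈ Finset.Icc 1 (k+1), if j < x then c x else 0 := by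
          refine Finset.sum_congr rfl fun j _ => ?_
          rw [hd j, hm1, hfil j, Finset.sum_filter]
      _ = ∑ x ∈ Finset.Icc 1 (k+1), ∑ j ∈ Finset.range (k+2), if j < x then c x else 0 :=
          Finset.sum_comm
      _ = ∑ x ∈ Finset.Icc 1 (k+1), (x : ℝ) * c x := by
          refine Finset.sum_congr rfl fun x hx => ?_
          simp only [mem_Icc] at hx
          rw [← Finset.sum_filter]
          have : (Finset.range (k+2)).filter (fun j => j < x) = Finset.range x := by
            ext j; simp only [mem_filter, mem_range]; omega
          rw [this, Finset.sum_const, Finset.card_range, nsmul_eq_mul]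
  rw [hdd, hsecond]
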